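/- Let a > 0, b < 0, p > 1, δ > 0 be real numbers, and let u : ℝ → (0, (−a/b)^{1/(p−1)}] be a differentiable function satisfying u'(t) ≥ δ·|a·u(t) + b·u(t)^p| for all t ∈ ℝ. Then either u(t) = (−a/b)^{1/(p−1)} for all t in some interval (t₀, ∞), or there exists c > 0 and C > 0 such that (−a/b)^{1/(p−1)} − u(t) ≤ C·e^{−ct} for all t ≥ 0. -/

import Mathlib

open Set

theorem stmt_9 (a b p δ : ℝ) (ha : 0 < a) (hb : b < 0) (hp : 1 < p) (hδ : 0 < δ)
    (u u' : ℝ → ℝ)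
    (hpos : ∀ t : ℝ, 0 < u t) (hbd : ∀ t : ℝ, u t ≤ (-a / b) ^ (1 / (p - 1)))
    (hderiv : ∀ t : ℝ, HasDerivAt u (u' t) t)
    (hineq : ∀ t : ℝ, u' t ≥ δ * |a * u t + b * u t ^ p|) :
    (∃ t₀ : ℝ, ∀ t > t₀, u t = (-a / b) ^ (1 / (p - 1))) ∨
    (∃ c > (0 : ℝ), ∃ C > (0 : ℝ), ∀ t ≥ (0 : ℝ),
      (-a / b) ^ (1 / (p - 1)) - u t ≤ C * Real.exp (-c * t)) := by
  have hp1 : 0 < p - 1 := by linarith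
  have hb' : b ≠ 0 := ne_of_lt hb
  have hab : 0 < -a / b := div_pos_iff.mpr (Or.inr ⟨by linarith, hb⟩)
  set M := (-a / b) ^ (1 / (p - 1)) with hMdef
  have hM0 : 0 < M := Real.rpow_pos_of_pos hab _
  have hMp : M ^ (p - 1) = -a / b := by
    rw [hMdef, ← Real.rpow_mul hab.le, one_div, inv_mul_cancel₀ hp1.ne', Real.rpow_one]
  set f : ℝ → ℝ := fun x => a * x + b * x ^ p with hfdef
  have hsplit : ∀ x : ℝ, 0 < x → x ^ p = x * x ^ (p - 1) := by
    intro x hx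
    have h1 : (1 : ℝ) + (p - 1) = p := by ring
    nth_rewrite 1 [← h1]
    rw [Real.rpow_add hx, Real.rpow_one]
  have hfM : f M = 0 := by
    simp only [hfdef]
    rw [hsplit M hM0, hMp]
    field_simp
    ring
  -- monotonicity of u
  have hu'0 : ∀ t, 0 ≤ u' t := fun t =>
    le_trans (mul_nonneg hδ.le (abs_nonneg _)) (hineq t)
  have hd : Differentiable ℝ u := fun t => (hderiv t).differentiableAt
  have hdu : ∀ t, deriv u t = u' t := fun t => (hderiv t).deriv
  have hmono : Monotone u :=
    monotone_of_deriv_nonneg hd (fun t => by rw [hdu t]; exact hu'0 t)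
  by_cases hcase : ∃ t₀, u t₀ = M
  · obtain ⟨t₀, ht₀⟩ := hcase
    left
    exact ⟨t₀, fun t ht => le_antisymm (hbd t) (ht₀ ▸ hmono ht.le)⟩
  · push_neg at hcase
    have hu0M : u 0 < M := lt_of_le_of_ne (hbd 0) (hcase 0)
    have hC : 0 < M - u 0 := sub_pos.mpr hu0M
    -- f is positive at u 0
    have hfu0 : 0 < f (u 0) := by
      have h1 : u 0 ^ (p - 1) < M ^ (p - 1) :=
        Real.rpow_lt_rpow (hpos 0).le hu0M hp1
      rw [hMp] at h1
      have h2 : b * (-a / b) < b * (u 0 ^ (p - 1)) :=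
        mul_lt_mul_of_neg_left h1 hb
      have h3 : b * (-a / b) = -a := by field_simp
      simp only [hfdef]
      rw [hsplit (u 0) (hpos 0)]
      nlinarith [hpos 0]
    -- concavity of f on [0, ∞)
    have hconc : ConcaveOn ℝ (Ici (0 : ℝ)) f := by
      have h1 : ConvexOn ℝ (Ici (0 : ℝ)) (fun x : ℝ => x ^ p) := convexOn_rpow hp.le
      have h2 : ConcaveOn ℝ (Ici (0 : ℝ)) (fun x : ℝ => a * x) := by
        have := (concaveOn_id (convex_Ici (0 : ℝ))).smul (c := a) ha.le
        simpa [smul_eq_mul] using this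
      have h3 : ConcaveOn ℝ (Ici (0 : ℝ)) (fun x : ℝ => b * x ^ p) := by
        have := h1.neg.smul (c := -b) (by linarith)
        have heq : (fun x : ℝ => -b • (-(fun x : ℝ => x ^ p)) x) = fun x : ℝ => b * x ^ p := by
          funext x; simp only [Pi.neg_apply, smul_eq_mul]; ring
        rwa [heq] at this
      rw [hfdef]; exact h2.add h3
    -- key interpolation inequality
    have key : ∀ x, u 0 ≤ x → x ≤ M → f (u 0) * ((M - x) / (M - u 0)) ≤ f x := by
      intro x hx1 hx2
      have hl : 0 ≤ (M - x) / (M - u 0) := div_nonneg (by linarith) hC.le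
      have hm : 0 ≤ (x - u 0) / (M - u 0) := div_nonneg (by linarith) hC.le
      have hsum : (M - x) / (M - u 0) + (x - u 0) / (M - u 0) = 1 := by
        field_simp; ring
      have hcomb : ((M - x) / (M - u 0)) • u 0 + ((x - u 0) / (M - u 0)) • M = x := by
        simp only [smul_eq_mul]
        field_simp
        ring
      have h := hconc.2 (mem_Ici.mpr (hpos 0).le) (mem_Ici.mpr hM0.le) hl hm hsum
      rw [hcomb] at h
      calc f (u 0) * ((M - x) / (M - u 0))
          = ((M - x) / (M - u 0)) • f (u 0) + ((x - u 0) / (M - u 0)) • f M := by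
            rw [hfM]; simp [smul_eq_mul]; ring
        _ ≤ f x := h
    set c := δ * f (u 0) / (M - u 0) with hc
    have hcpos : 0 < c := div_pos (mul_pos hδ hfu0) hC
    right
    refine ⟨c, hcpos, M - u 0, hC, ?_⟩
    set w : ℝ → ℝ := fun s => (M - u s) * Real.exp (c * s) with hw
    have hwderiv : ∀ s, HasDerivAt w
        ((0 - u' s) * Real.exp (c * s) + (M - u s) * (Real.exp (c * s) * (c * 1))) s := by
      intro s
      exact ((hasDerivAt_const s M).sub (hderiv s)).mul (((hasDerivAt_id s).const_mul c).exp)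
    have hanti : AntitoneOn w (Ici 0) := by
      apply antitoneOn_of_deriv_nonpos (convex_Ici 0)
      · exact (Continuous.mul (continuous_const.sub hd.continuous)
          (Real.continuous_exp.comp (continuous_const.mul continuous_id))).continuousOn
      · intro s _
        exact (hwderiv s).differentiableAt.differentiableWithinAt
      · intro s hs
        rw [interior_Ici] at hs
        have hs0 : (0 : ℝ) ≤ s := (mem_Ioi.mp hs).le
        rw [(hwderiv s).deriv]
        have hus : u 0 ≤ u s := hmono hs0
        have hkey := key (u s) hus (hbd s)
        have h2 : δ * f (u s) ≤ u' s := by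
          have h2' : δ * f (u s) ≤ δ * |a * u s + b * u s ^ p| :=
            mul_le_mul_of_nonneg_left (le_abs_self _) hδ.le
          exact le_trans h2' (hineq s)
        have h3 : c * (M - u s) = δ * (f (u 0) * ((M - u s) / (M - u 0))) := by
          rw [hc]; field_simp
        have h4 : δ * (f (u 0) * ((M - u s) / (M - u 0))) ≤ δ * f (u s) :=
          mul_le_mul_of_nonneg_left hkey hδ.le
        have h5 : c * (M - u s) ≤ u' s := le_trans (h3.le.trans h4) h2
        nlinarith [Real.exp_pos (c * s)]
    intro t ht
    have h5 : w t ≤ w 0 := hanti (mem_Ici.mpr le_rfl) (mem_Ici.mpr ht) ht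
    have hw0 : w 0 = M - u 0 := by simp [hw]
    rw [hw0] at h5
    have hE : 0 < Real.exp (c * t) := Real.exp_pos _
    have hEneg : Real.exp (-c * t) = (Real.exp (c * t))⁻¹ := by
      rw [neg_mul, Real.exp_neg]
    rw [hEneg]
    calc M - u t = (M - u t) * Real.exp (c * t) * (Real.exp (c * t))⁻¹ := by
          field_simp
      _ ≤ (M - u 0) * (Real.exp (c * t))⁻¹ := by
          apply mul_le_mul_of_nonneg_right h5 (inv_nonneg.mpr hE.le)
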